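/- Let G be a finite group and φ : G → GL(V) an absolutely irreducible representation over a field. If every element of G is conjugate to its inverse, then φ(G) preserves a nondegenerate symmetric or skew-symmetric bilinear form on V. -/

import Mathlib

open LinearMap Module Matrix

namespace RGIFAux

variable {G F V : Type*} [Group G] [Field F] [AddCommGroup V] [Module F V]
  [FiniteDimensional F V] (ρ : Representation F G V)

lemma trace_nondeg (f : Module.End F V)
    (h : ∀ g : Module.End F V, LinearMap.trace F V (f * g) = 0) : f = 0 := by
  ext v
  rw [LinearMap.zero_apply, ← Module.forall_dual_apply_eq_zero_iff F (f v)]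
  intro φ
  have h2 : f * (dualTensorHom F V V (φ ⊗ₜ[F] v)) = dualTensorHom F V V (φ ⊗ₜ[F] (f v)) := by
    ext w
    simp [Module.End.mul_apply, dualTensorHom_apply]
  have h1 := h (dualTensorHom F V V (φ ⊗ₜ[F] v))
  rwa [h2, trace_eq_contract_apply, contractLeft_apply] at h1

lemma transpose_surjective :
    Function.Surjective fun f : Module.End F V =>
      (Module.Dual.transpose (R := F) f : Module.End F (Module.Dual F V)) := by
  classical
  intro φ
  let b := Module.finBasis F V
  refine ⟨Matrix.toLin b b (LinearMap.toMatrix b.dualBasis b.dualBasis φ)ᵀ, ?_⟩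
  apply (LinearMap.toMatrix b.dualBasis b.dualBasis).injective
  rw [LinearMap.toMatrix_transpose, LinearMap.toMatrix_toLin, Matrix.transpose_transpose]


lemma exists_invariant_compl
    (hirr : ∀ W : Submodule F V, (∀ g : G, ∀ v ∈ W, ρ g v ∈ W) → W = ⊥ ∨ W = ⊤)
    {ι : Type} [Fintype ι] [DecidableEq ι]
    (W : Submodule F (ι → V))
    (hW : ∀ g : G, ∀ x ∈ W, (fun i => ρ g (x i)) ∈ W) :
    ∃ W' : Submodule F (ι → V),
      (∀ g : G, ∀ x ∈ W', (fun i => ρ g (x i)) ∈ W') ∧ IsCompl W W' := by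
  classical
  set Inv : Submodule F (ι → V) → Prop :=
    fun U => ∀ g : G, ∀ x ∈ U, (fun i => ρ g (x i)) ∈ U with hInv
  have supinv : ∀ A B : Submodule F (ι → V), Inv A → Inv B → Inv (A ⊔ B) := by
    intro A B hA hB g x hx
    obtain ⟨a, ha, b, hb, rfl⟩ := Submodule.mem_sup.mp hx
    have : (fun i => ρ g ((a + b) i)) = (fun i => ρ g (a i)) + fun i => ρ g (b i) := by
      funext i; simp
    rw [this]
    exact Submodule.add_mem _ (Submodule.mem_sup_left (hA g a ha))
      (Submodule.mem_sup_right (hB g b hb))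
  set Vi : ι → Submodule F (ι → V) :=
    fun i => LinearMap.range (LinearMap.single F (fun _ : ι => V) i) with hVidef
  have hVimem : ∀ (i : ι) (x : ι → V), x ∈ Vi i ↔ x = Pi.single i (x i) := by
    intro i x
    constructor
    · rintro ⟨v, rfl⟩
      simp [LinearMap.single_apply]
    · intro hx
      exact ⟨x i, hx.symm⟩
  have hViinv : ∀ i, Inv (Vi i) := by
    intro i g x hx
    rw [hVimem] at hx ⊢
    rw [hx]
    funext j
    rcases eq_or_ne j i with rfl | hj
    · simp
    · simp [Pi.single_eq_of_ne hj]
  have hsimple : ∀ (i : ι) (U : Submodule F (ι → V)), U ≤ Vi i → Inv U →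
      U = ⊥ ∨ U = Vi i := by
    intro i U hle hU
    have hinv' : ∀ g : G, ∀ v ∈ U.map (LinearMap.proj i), ρ g v ∈ U.map (LinearMap.proj i) := by
      rintro g _ ⟨x, hx, rfl⟩
      exact ⟨fun j => ρ g (x j), hU g x hx, rfl⟩
    rcases hirr (U.map (LinearMap.proj i)) hinv' with h | h
    · left
      rw [eq_bot_iff]
      intro x hx
      have hx' : x = Pi.single i (x i) := (hVimem i x).mp (hle hx)
      have : x i ∈ U.map (LinearMap.proj i) := ⟨x, hx, rfl⟩
      rw [h, Submodule.mem_bot] at this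
      rw [hx', this, Pi.single_zero]
      exact Submodule.zero_mem _
    · right
      refine le_antisymm hle ?_
      rintro _ ⟨v, rfl⟩
      have : v ∈ U.map (LinearMap.proj i) := by rw [h]; trivial
      obtain ⟨y, hy, hyi⟩ := this
      have hy' : y = Pi.single i (y i) := (hVimem i y).mp (hle hy)
      have h5 : (LinearMap.single F (fun _ : ι => V) i) v = y := by
        rw [hy', show y i = v from hyi]; rfl
      rwa [h5]
  set S : Set (Submodule F (ι → V)) := {W' | Inv W' ∧ W ⊓ W' = ⊥} with hS
  set ds : Set ℕ := (fun W' : Submodule F (ι → V) => Module.finrank F W') '' S with hds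
  have hne : ds.Nonempty := ⟨Module.finrank F (⊥ : Submodule F (ι → V)),
    ⟨⊥, ⟨by
      intro g x hx
      rw [Submodule.mem_bot] at hx ⊢
      subst hx
      funext i
      simp, inf_bot_eq W⟩, rfl⟩⟩
  have hbdd : BddAbove ds := by
    refine ⟨Module.finrank F (ι → V), ?_⟩
    rintro _ ⟨W', _, rfl⟩
    exact Submodule.finrank_le W'
  obtain ⟨W', hW'S, hrank⟩ := Nat.sSup_mem hne hbdd
  have hVi : ∀ i, Vi i ≤ W ⊔ W' := by
    intro i
    by_contra hle
    have hKinv : Inv (Vi i ⊓ (W ⊔ W')) := by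
      intro g x hx
      exact ⟨hViinv i g x hx.1, supinv W W' hW hW'S.1 g x hx.2⟩
    have hK : Vi i ⊓ (W ⊔ W') = ⊥ := by
      rcases hsimple i _ inf_le_left hKinv with h | h
      · exact h
      · exact absurd (h ▸ inf_le_right : Vi i ≤ W ⊔ W') hle
    have hW''S : W' ⊔ Vi i ∈ S := by
      constructor
      · exact supinv _ _ hW'S.1 (hViinv i)
      · rw [eq_bot_iff]
        rintro x hx
        obtain ⟨hxW, hxS⟩ := Submodule.mem_inf.mp hx
        obtain ⟨a, ha, b, hb, rfl⟩ := Submodule.mem_sup.mp hxS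
        have hbK : b ∈ Vi i ⊓ (W ⊔ W') := by
          refine ⟨hb, ?_⟩
          have : b = (a + b) - a := by abel
          rw [this]
          exact Submodule.sub_mem _ (Submodule.mem_sup_left hxW)
            (Submodule.mem_sup_right ha)
        rw [hK, Submodule.mem_bot] at hbK
        rw [hbK, add_zero]
        rw [hbK, add_zero] at hxW
        have : a ∈ W ⊓ W' := ⟨hxW, ha⟩
        rwa [hW'S.2] at this
    have hlt : W' < W' ⊔ Vi i := by
      refine lt_of_le_of_ne le_sup_left (fun h => hle ?_)
      calc Vi i ≤ W' ⊔ Vi i := le_sup_right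
        _ = W' := h.symm
        _ ≤ W ⊔ W' := le_sup_right
    have h1 : Module.finrank F W' < Module.finrank F ↥(W' ⊔ Vi i) :=
      Submodule.finrank_lt_finrank_of_lt hlt
    have h2 : Module.finrank F ↥(W' ⊔ Vi i) ≤ sSup ds :=
      le_csSup hbdd ⟨W' ⊔ Vi i, hW''S, rfl⟩
    have hrank' : Module.finrank F ↥W' = sSup ds := hrank
    omega
  refine ⟨W', hW'S.1, ?_, ?_⟩
  · exact disjoint_iff.mpr hW'S.2
  · rw [codisjoint_iff, eq_top_iff]
    intro x _
    have : x = ∑ i, Pi.single i (x i) := (Finset.univ_sum_single x).symm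
    rw [this]
    refine Submodule.sum_mem _ fun i _ => hVi i ⟨x i, ?_⟩
    simp [LinearMap.single_apply]

lemma burnside
    (hirr : ∀ W : Submodule F V, (∀ g : G, ∀ v ∈ W, ρ g v ∈ W) → W = ⊥ ∨ W = ⊤)
    (habs : ∀ f : V →ₗ[F] V, (∀ g : G, f ∘ₗ ρ g = ρ g ∘ₗ f) →
      ∃ c : F, f = c • LinearMap.id) :
    Function.Surjective ⇑(ρ.asAlgebraHom) := by
  classical
  intro f
  set n := Module.finrank F V with hn
  set b := Module.finBasis F V with hb
  let ev : MonoidAlgebra F G →ₗ[F] (Fin n → V) :=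
    { toFun := fun a i => ρ.asAlgebraHom a (b i)
      map_add' := by intro x y; funext i; simp
      map_smul' := by intro c x; funext i; simp }
  set N := LinearMap.range ev with hN
  have hNinv : ∀ g : G, ∀ x ∈ N, (fun i => ρ g (x i)) ∈ N := by
    rintro g _ ⟨a, rfl⟩
    refine ⟨MonoidAlgebra.single g 1 * a, ?_⟩
    funext i
    show ρ.asAlgebraHom (MonoidAlgebra.single g 1 * a) (b i) = ρ g (ρ.asAlgebraHom a (b i))
    rw [_root_.map_mul, Representation.asAlgebraHom_single, one_smul, Module.End.mul_apply]
  obtain ⟨W', hW'inv, hcompl⟩ := exists_invariant_compl ρ hirr N hNinv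
  set q := Submodule.projectionOnto N W' hcompl with hq
  set p : (Fin n → V) →ₗ[F] (Fin n → V) := N.subtype ∘ₗ q with hp
  have hpN : ∀ x ∈ N, p x = x := by
    intro x hx
    show (q x : Fin n → V) = x
    rw [show x = ((⟨x, hx⟩ : N) : Fin n → V) from rfl,
      hq, Submodule.projectionOnto_apply_left hcompl]
  have hpW' : ∀ x ∈ W', p x = 0 := by
    intro x hx
    show (q x : Fin n → V) = 0
    rw [hq, Submodule.projectionOnto_apply_of_mem_right hcompl hx, Submodule.coe_zero]
  have hdecomp : ∀ x : Fin n → V, ∃ u ∈ N, ∃ w ∈ W', x = u + w := by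
    intro x
    have hx : x ∈ N ⊔ W' := by rw [codisjoint_iff.mp hcompl.codisjoint]; trivial
    obtain ⟨u, hu, w, hw, hx⟩ := Submodule.mem_sup.mp hx
    exact ⟨u, hu, w, hw, hx.symm⟩
  have hpg : ∀ (g : G) (x : Fin n → V), p (fun i => ρ g (x i)) = fun i => ρ g (p x i) := by
    intro g x
    obtain ⟨u, hu, w, hw, rfl⟩ := hdecomp x
    have h1 : (fun i => ρ g ((u + w) i)) = (fun i => ρ g (u i)) + fun i => ρ g (w i) := by
      funext i; simp
    rw [h1, map_add, hpN _ (hNinv g u hu), hpW' _ (hW'inv g w hw), add_zero,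
      map_add, hpN u hu, hpW' w hw, add_zero]
  have hentry : ∀ j i : Fin n, ∃ c : F, ∀ v : V, p (Pi.single i v) j = c • v := by
    intro j i
    set e : V →ₗ[F] V :=
      (LinearMap.proj j) ∘ₗ p ∘ₗ (LinearMap.single F (fun _ : Fin n => V) i) with he
    have hcomm : ∀ g : G, e ∘ₗ ρ g = ρ g ∘ₗ e := by
      intro g
      ext v
      show p ((LinearMap.single F (fun _ : Fin n => V) i) (ρ g v)) j
        = ρ g (p ((LinearMap.single F (fun _ : Fin n => V) i) v) j)
      have h2 : (LinearMap.single F (fun _ : Fin n => V) i) (ρ g v)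
          = fun k => ρ g (((LinearMap.single F (fun _ : Fin n => V) i) v) k) := by
        funext k
        rcases eq_or_ne k i with rfl | hk
        · simp
        · simp [LinearMap.single_apply, Pi.single_eq_of_ne hk]
      rw [h2, hpg g]
    obtain ⟨c, hc⟩ := habs e hcomm
    refine ⟨c, fun v => ?_⟩
    have := congrFun (congrArg DFunLike.coe hc) v
    simpa [he] using this
  choose c hc using hentry
  have hkey : ∀ (x : Fin n → V) (j : Fin n), p x j = ∑ i, c j i • x i := by
    intro x j
    conv_lhs => rw [← Finset.univ_sum_single x, map_sum]
    rw [Finset.sum_apply]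
    exact Finset.sum_congr rfl fun i _ => hc j i (x i)
  have hbN : (fun i => b i) ∈ N := ⟨1, by funext i; show ρ.asAlgebraHom 1 (b i) = b i; simp⟩
  have hyN : (fun i => f (b i)) ∈ N := by
    have hppt : p (fun i => f (b i)) = fun i => f (b i) := by
      funext j
      rw [hkey]
      have : ∑ i, c j i • f (b i) = f (∑ i, c j i • b i) := by
        rw [map_sum]
        exact Finset.sum_congr rfl fun i _ => (_root_.map_smul f _ _).symm
      rw [this, ← hkey, hpN _ hbN]
    rw [← hppt]
    exact Submodule.coe_mem (q _)
  obtain ⟨a, ha⟩ := hyN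
  refine ⟨a, b.ext fun i => ?_⟩
  exact congrFun ha i

lemma trace_single_eq (hreal : ∀ g : G, IsConj g g⁻¹) (g h : G) :
    LinearMap.trace F V (ρ g * ρ h)
      = LinearMap.trace F (Module.Dual F V) ((ρ.dual) g * (ρ.dual) h) := by
  have h1 : ρ g * ρ h = ρ (g * h) := (_root_.map_mul ρ g h).symm
  have h2 : (ρ.dual) g * (ρ.dual) h = (ρ.dual) (g * h) := (_root_.map_mul ρ.dual g h).symm
  rw [h1, h2, Representation.dual_apply, LinearMap.trace_transpose']
  obtain ⟨u, hu⟩ := isConj_iff.mp (hreal (g * h))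
  calc LinearMap.trace F V (ρ (g * h))
      = LinearMap.trace F V (ρ (u⁻¹ * (u * (g * h)))) := by congr 1; group
    _ = LinearMap.trace F V (ρ u⁻¹ * ρ (u * (g * h))) := by
        rw [_root_.map_mul ρ u⁻¹ (u * (g * h))]
    _ = LinearMap.trace F V (ρ (u * (g * h)) * ρ u⁻¹) := by rw [LinearMap.trace_mul_comm]
    _ = LinearMap.trace F V (ρ (u * (g * h) * u⁻¹)) := by
        rw [_root_.map_mul ρ (u * (g * h)) u⁻¹]
    _ = LinearMap.trace F V (ρ ((g * h)⁻¹)) := by rw [hu]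

lemma trace_eq (hreal : ∀ g : G, IsConj g g⁻¹) (x y : MonoidAlgebra F G) :
    LinearMap.trace F V (ρ.asAlgebraHom x * ρ.asAlgebraHom y)
      = LinearMap.trace F (Module.Dual F V)
        ((ρ.dual).asAlgebraHom x * (ρ.dual).asAlgebraHom y) := by
  induction x using MonoidAlgebra.induction_linear with
  | zero => simp
  | add f g hf hg => simp only [_root_.map_add, add_mul, hf, hg]
  | single g a =>
    induction y using MonoidAlgebra.induction_linear with
    | zero => simp
    | add f' g' hf' hg' => simp only [_root_.map_add, mul_add, hf', hg']
    | single h b =>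
      simp only [Representation.asAlgebraHom_single, smul_mul_assoc, mul_smul_comm,
        _root_.map_smul, smul_eq_mul]
      rw [trace_single_eq ρ hreal g h]

lemma dual_asAlgebraHom_eq (x : MonoidAlgebra F G) :
    (ρ.dual).asAlgebraHom (MonoidAlgebra.mapDomain (fun g : G => g⁻¹) x)
      = Module.Dual.transpose (R := F) (ρ.asAlgebraHom x) := by
  induction x using MonoidAlgebra.induction_linear with
  | zero => simp [MonoidAlgebra.mapDomain_zero]
  | add f g hf hg => rw [MonoidAlgebra.mapDomain_add, _root_.map_add, hf, hg, _root_.map_add,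
      _root_.map_add]
  | single g a =>
    rw [MonoidAlgebra.mapDomain_single, Representation.asAlgebraHom_single,
      Representation.asAlgebraHom_single, Representation.dual_apply, inv_inv,
      _root_.map_smul]

lemma dual_surjective
    (hirr : ∀ W : Submodule F V, (∀ g : G, ∀ v ∈ W, ρ g v ∈ W) → W = ⊥ ∨ W = ⊤)
    (habs : ∀ f : V →ₗ[F] V, (∀ g : G, f ∘ₗ ρ g = ρ g ∘ₗ f) →
      ∃ c : F, f = c • LinearMap.id) :
    Function.Surjective ⇑((ρ.dual).asAlgebraHom) := by
  intro φ
  obtain ⟨f, hf⟩ := transpose_surjective (F := F) (V := V) φ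
  obtain ⟨x, hx⟩ := burnside ρ hirr habs f
  exact ⟨MonoidAlgebra.mapDomain (fun g : G => g⁻¹) x, by rw [dual_asAlgebraHom_eq, hx]; exact hf⟩

lemma ker_eq
    (hirr : ∀ W : Submodule F V, (∀ g : G, ∀ v ∈ W, ρ g v ∈ W) → W = ⊥ ∨ W = ⊤)
    (habs : ∀ f : V →ₗ[F] V, (∀ g : G, f ∘ₗ ρ g = ρ g ∘ₗ f) →
      ∃ c : F, f = c • LinearMap.id)
    (hreal : ∀ g : G, IsConj g g⁻¹) (x : MonoidAlgebra F G) :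
    ρ.asAlgebraHom x = 0 ↔ (ρ.dual).asAlgebraHom x = 0 := by
  constructor
  · intro hx
    apply trace_nondeg
    intro ψ
    obtain ⟨y, rfl⟩ := dual_surjective ρ hirr habs ψ
    rw [← trace_eq ρ hreal, hx, zero_mul, map_zero]
  · intro hx
    apply trace_nondeg
    intro ψ
    obtain ⟨y, rfl⟩ := burnside ρ hirr habs ψ
    rw [trace_eq ρ hreal, hx, zero_mul, map_zero]

end RGIFAux

open RGIFAux in
/-- If every element of the finite group `G` is conjugate to its inverse, then an
absolutely irreducible representation of `G` preserves a nondegenerate symmetric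
or skew-symmetric bilinear form. -/
theorem real_group_invariant_form
    {G F V : Type*} [Group G] [Finite G] [Field F] [AddCommGroup V] [Module F V]
    [FiniteDimensional F V] (ρ : Representation F G V)
    (hirr : ∀ W : Submodule F V, (∀ g : G, ∀ v ∈ W, ρ g v ∈ W) → W = ⊥ ∨ W = ⊤)
    (habs : ∀ f : V →ₗ[F] V, (∀ g : G, f ∘ₗ ρ g = ρ g ∘ₗ f) →
      ∃ c : F, f = c • LinearMap.id)
    (hreal : ∀ g : G, IsConj g g⁻¹) :
    ∃ B : V →ₗ[F] V →ₗ[F] F,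
      (∀ v : V, (∀ w : V, B v w = 0) → v = 0) ∧
      (∀ (g : G) (v w : V), B (ρ g v) (ρ g w) = B v w) ∧
      ((∀ v w : V, B v w = B w v) ∨ (∀ v w : V, B v w = - B w v)) := by
  classical
  rcases subsingleton_or_nontrivial V with hV | hV
  · exact ⟨0, fun v _ => Subsingleton.elim v 0, by simp, Or.inl (by simp)⟩
  obtain ⟨v₀, hv₀⟩ := exists_ne (0 : V)
  set π := ρ.asAlgebraHom with hπdef
  set πd := (ρ.dual).asAlgebraHom with hπddef
  let ev : MonoidAlgebra F G →ₗ[F] V :=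
    { toFun := fun x => π x v₀
      map_add' := by intro x y; simp
      map_smul' := by intro c x; simp }
  have hev : ∀ x, ev x = π x v₀ := fun _ => rfl
  have hevmul : ∀ (g : G) (x : MonoidAlgebra F G),
      ev (MonoidAlgebra.single g 1 * x) = ρ g (ev x) := by
    intro g x
    rw [hev, _root_.map_mul, Representation.asAlgebraHom_single, one_smul,
      Module.End.mul_apply]
    rfl
  have hev1 : ev 1 = v₀ := by rw [hev, _root_.map_one]; rfl
  have hrinv : ∀ g : G, ∀ v ∈ LinearMap.range ev, ρ g v ∈ LinearMap.range ev := by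
    rintro g _ ⟨x, rfl⟩
    exact ⟨MonoidAlgebra.single g 1 * x, hevmul g x⟩
  have hevrange : LinearMap.range ev = ⊤ := by
    rcases hirr _ hrinv with h | h
    · exfalso
      have hv : v₀ ∈ LinearMap.range ev := ⟨1, hev1⟩
      rw [h, Submodule.mem_bot] at hv
      exact hv₀ hv
    · exact h
  have hevsurj : Function.Surjective ev := LinearMap.range_eq_top.mp hevrange
  -- the space of functionals annihilated by the "kernel left ideal"
  let U : Submodule F (Module.Dual F V) :=
    { carrier := {f | ∀ x : MonoidAlgebra F G, ev x = 0 → πd x f = 0}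
      add_mem' := fun hf hg x hx => by rw [_root_.map_add, hf x hx, hg x hx, add_zero]
      zero_mem' := fun x _ => map_zero _
      smul_mem' := fun c f hf x hx => by rw [_root_.map_smul, hf x hx, smul_zero] }
  have hUne : U ≠ ⊥ := by
    intro hU
    have hKinf : ⨅ x : {x : MonoidAlgebra F G // ev x = 0},
        LinearMap.ker (πd x.1) = ⊥ := by
      rw [eq_bot_iff]
      intro f hf
      rw [Submodule.mem_bot]
      have hfU : f ∈ U := by
        intro x hx
        exact LinearMap.mem_ker.mp ((Submodule.mem_iInf _).mp hf ⟨x, hx⟩)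
      rw [hU] at hfU
      exact hfU
    set SS : Set (Submodule F (Module.Dual F V)) :=
      Set.range (fun s : Finset {x : MonoidAlgebra F G // ev x = 0} =>
        s.inf fun x => LinearMap.ker (πd x.1)) with hSS
    obtain ⟨m, hm, hmin⟩ := IsArtinian.set_has_minimal SS ⟨⊤, ∅, rfl⟩
    obtain ⟨s₀, rfl⟩ := hm
    have hmbot : s₀.inf (fun x => LinearMap.ker (πd x.1)) = ⊥ := by
      by_contra hne
      obtain ⟨f, hfm, hf0⟩ := (Submodule.ne_bot_iff _).mp hne
      have hnall : ¬ ∀ x : {x : MonoidAlgebra F G // ev x = 0},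
          f ∈ LinearMap.ker (πd x.1) := by
        intro hall
        have : f ∈ ⨅ x : {x : MonoidAlgebra F G // ev x = 0},
            LinearMap.ker (πd x.1) := (Submodule.mem_iInf _).mpr hall
        rw [hKinf, Submodule.mem_bot] at this
        exact hf0 this
      push_neg at hnall
      obtain ⟨x, hx⟩ := hnall
      refine hmin ((insert x s₀).inf fun y => LinearMap.ker (πd y.1))
        ⟨insert x s₀, rfl⟩ (lt_of_le_of_ne ?_ ?_)
      · exact Finset.inf_mono (Finset.subset_insert x s₀)
      · intro heq
        have hf' : f ∈ (insert x s₀).inf fun y => LinearMap.ker (πd y.1) := by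
          rw [heq]; exact hfm
        have hle : ((insert x s₀).inf fun y => LinearMap.ker (πd y.1))
            ≤ LinearMap.ker (πd x.1) := Finset.inf_le (Finset.mem_insert_self x s₀)
        exact hx (hle hf')
    let Φ : Module.Dual F V →ₗ[F] (s₀ → Module.Dual F V) :=
      LinearMap.pi fun x => πd x.1.1
    have hΦker : LinearMap.ker Φ = ⊥ := by
      rw [eq_bot_iff]
      intro f hf
      rw [LinearMap.mem_ker] at hf
      rw [Submodule.mem_bot]
      have hfm : f ∈ s₀.inf fun x => LinearMap.ker (πd x.1) := by
        rw [Submodule.mem_finsetInf]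
        intro x hxs
        exact LinearMap.mem_ker.mpr (congrFun hf ⟨x, hxs⟩)
      rw [hmbot, Submodule.mem_bot] at hfm
      exact hfm
    obtain ⟨Ψ, hΨ⟩ := Φ.exists_leftInverse_of_injective hΦker
    have hψ := fun x : s₀ =>
      dual_surjective ρ hirr habs (Ψ ∘ₗ LinearMap.single F (fun _ : s₀ => Module.Dual F V) x)
    choose y hy using hψ
    set z : MonoidAlgebra F G := ∑ x : s₀, y x * x.1.1 with hz
    have hπdz : πd z = 1 := by
      apply LinearMap.ext
      intro f
      rw [hz, map_sum, LinearMap.sum_apply]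
      have hterm : ∀ x : s₀, πd (y x * x.1.1) f
          = Ψ ((LinearMap.single F (fun _ : s₀ => Module.Dual F V) x) (Φ f x)) := by
        intro x
        rw [_root_.map_mul, Module.End.mul_apply, hy x]
        rfl
      rw [Finset.sum_congr rfl fun x _ => hterm x, ← map_sum]
      have : (∑ x : s₀, (LinearMap.single F (fun _ : s₀ => Module.Dual F V) x) (Φ f x))
          = Φ f := by
        funext j
        rw [Finset.sum_apply]
        simpa [LinearMap.single_apply] using
          congrFun (Finset.univ_sum_single (Φ f)) j
      rw [this]
      exact congrFun (congrArg DFunLike.coe hΨ) f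
    have hevz : ev z = 0 := by
      rw [hz, map_sum]
      refine Finset.sum_eq_zero fun x _ => ?_
      rw [hev, _root_.map_mul, Module.End.mul_apply, ← hev, x.1.2, map_zero]
    have hπz : π (z - 1) = 0 :=
      (ker_eq ρ hirr habs hreal (z - 1)).mpr (by rw [map_sub, hπdz, _root_.map_one, sub_self])
    have : ev (z - 1) = 0 := by rw [hev, hπz, LinearMap.zero_apply]
    rw [map_sub, hevz, hev1, zero_sub, neg_eq_zero] at this
    exact hv₀ this
  obtain ⟨f₀, hf₀U, hf₀⟩ := (Submodule.ne_bot_iff U).mp hUne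
  obtain ⟨s, hs⟩ := ev.exists_rightInverse_of_surjective hevrange
  let evd : MonoidAlgebra F G →ₗ[F] Module.Dual F V :=
    { toFun := fun x => πd x f₀
      map_add' := by intro x y; simp
      map_smul' := by intro c x; simp }
  let T : V →ₗ[F] Module.Dual F V := evd ∘ₗ s
  have hTev : ∀ x, T (ev x) = evd x := by
    intro x
    have h1 : ev (s (ev x) - x) = 0 := by
      rw [map_sub, sub_eq_zero]
      exact congrFun (congrArg DFunLike.coe hs) (ev x)
    have h2 := hf₀U _ h1
    show evd (s (ev x)) = evd x
    have h3 : evd (s (ev x) - x) = 0 := h2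
    rw [map_sub, sub_eq_zero] at h3
    exact h3
  have hTg : ∀ (g : G) (v : V), T (ρ g v) = (ρ.dual) g (T v) := by
    intro g v
    obtain ⟨x, rfl⟩ := hevsurj v
    rw [← hevmul g x, hTev, hTev]
    show πd (MonoidAlgebra.single g 1 * x) f₀ = (ρ.dual) g (πd x f₀)
    rw [_root_.map_mul, Representation.asAlgebraHom_single, one_smul, Module.End.mul_apply]
  have hcancel : ∀ (g : G) (w : V), ρ g (ρ g⁻¹ w) = w := by
    intro g w
    rw [← Module.End.mul_apply, ← _root_.map_mul, mul_inv_cancel, _root_.map_one,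
      Module.End.one_apply]
  have hinv : ∀ (g : G) (v w : V), T (ρ g v) (ρ g w) = T v w := by
    intro g v w
    rw [hTg, Representation.dual_apply, Module.Dual.transpose_apply, LinearMap.comp_apply]
    congr 1
    rw [← Module.End.mul_apply, ← _root_.map_mul, inv_mul_cancel, _root_.map_one,
      Module.End.one_apply]
  have hTv₀ : T v₀ = f₀ := by
    rw [← hev1, hTev]
    show πd 1 f₀ = f₀
    rw [_root_.map_one]
    rfl
  have hkinv : ∀ g : G, ∀ v ∈ LinearMap.ker T, ρ g v ∈ LinearMap.ker T := by
    intro g v hv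
    rw [LinearMap.mem_ker] at hv ⊢
    rw [hTg, hv, map_zero]
  have hker : LinearMap.ker T = ⊥ := by
    rcases hirr _ hkinv with h | h
    · exact h
    · exfalso
      have : T v₀ = 0 := by
        have : v₀ ∈ LinearMap.ker T := by rw [h]; trivial
        exact LinearMap.mem_ker.mp this
      rw [hTv₀] at this
      exact hf₀ this
  have hTinj : Function.Injective T := LinearMap.ker_eq_bot.mp hker
  have hTbij : Function.Bijective T :=
    ⟨hTinj, (LinearMap.injective_iff_surjective_of_finrank_eq_finrank
      Subspace.dual_finrank_eq.symm).mp hTinj⟩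
  let e := LinearEquiv.ofBijective T hTbij
  have he : ∀ u, T (e.symm u) = u := fun u => e.apply_symm_apply u
  have hflipg : ∀ (g : G) (v : V), T.flip (ρ g v) = (ρ.dual) g (T.flip v) := by
    intro g v
    ext w
    rw [Representation.dual_apply, Module.Dual.transpose_apply, LinearMap.comp_apply]
    show T w (ρ g v) = T.flip v (ρ g⁻¹ w)
    show T w (ρ g v) = T (ρ g⁻¹ w) v
    calc T w (ρ g v) = T (ρ g (ρ g⁻¹ w)) (ρ g v) := by rw [hcancel]
      _ = T (ρ g⁻¹ w) v := hinv g _ v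
  let f : V →ₗ[F] V := e.symm.toLinearMap ∘ₗ T.flip
  have hfcomm : ∀ g : G, f ∘ₗ ρ g = ρ g ∘ₗ f := by
    intro g
    ext v
    show e.symm (T.flip (ρ g v)) = ρ g (e.symm (T.flip v))
    rw [hflipg]
    apply e.injective
    rw [LinearEquiv.apply_symm_apply]
    have h4 : e (ρ g (e.symm (T.flip v))) = T (ρ g (e.symm (T.flip v))) := rfl
    rw [h4, hTg, he]
  obtain ⟨c, hc⟩ := habs f hfcomm
  have hsym : ∀ v w : V, T w v = c * T v w := by
    intro v w
    have h1 : f v = c • v := by rw [hc]; rfl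
    have h2 : T (f v) = T.flip v := he (T.flip v)
    rw [h1, _root_.map_smul] at h2
    have h3 := congrFun (congrArg DFunLike.coe h2) w
    simpa using h3.symm
  have hw₁ : ∃ w, f₀ w ≠ 0 := by
    by_contra h
    push_neg at h
    exact hf₀ (LinearMap.ext fun w => h w)
  obtain ⟨w₁, hw₁⟩ := hw₁
  have hcc : c * c = 1 := by
    have h1 := hsym w₁ v₀
    have h2 := hsym v₀ w₁
    rw [h2] at h1
    have hne : T v₀ w₁ ≠ 0 := by rw [hTv₀]; exact hw₁
    rw [← mul_assoc] at h1
    conv_lhs at h1 => rw [← one_mul (T v₀ w₁)]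
    exact (mul_right_cancel₀ hne h1).symm
  refine ⟨T, ?_, hinv, ?_⟩
  · intro v hv
    have h1 : T v = 0 := LinearMap.ext hv
    have h2 : v ∈ LinearMap.ker T := LinearMap.mem_ker.mpr h1
    rw [hker, Submodule.mem_bot] at h2
    exact h2
  · rcases mul_self_eq_one_iff.mp hcc with hc1 | hc1
    · left
      intro v w
      rw [hsym v w, hc1, one_mul]
    · right
      intro v w
      rw [hsym v w, hc1, neg_one_mul, neg_neg]
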